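/- Let A and B be square integer matrices of the same size with coprime determinants. Then the Smith normal form of AB is the product of the Smith normal forms of A and B: S(AB) = S(A)S(B). -/

import Mathlib

open Matrix Finset

namespace SNFAux

variable {N : ℕ}

/-- The `k`-th determinantal divisor: the gcd of all `k × k` minors of `X`
(indexed by arbitrary row/column selection functions). -/
def ddiv (k : ℕ) (X : Matrix (Fin N) (Fin N) ℤ) : ℤ :=
  Finset.gcd Finset.univ
    (fun p : (Fin k → Fin N) × (Fin k → Fin N) => (X.submatrix p.1 p.2).det)

lemma ddiv_nonneg (k : ℕ) (X : Matrix (Fin N) (Fin N) ℤ) : 0 ≤ ddiv k X := by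
  rw [ddiv, ← Finset.normalize_gcd, ← Int.abs_eq_normalize]
  exact abs_nonneg _

lemma ddiv_dvd_minor (k : ℕ) (X : Matrix (Fin N) (Fin N) ℤ) (f g : Fin k → Fin N) :
    ddiv k X ∣ (X.submatrix f g).det :=
  Finset.gcd_dvd (Finset.mem_univ (⟨f, g⟩ : (Fin k → Fin N) × (Fin k → Fin N)))

lemma dvd_ddiv {k : ℕ} {X : Matrix (Fin N) (Fin N) ℤ} {d : ℤ}
    (h : ∀ f g : Fin k → Fin N, d ∣ (X.submatrix f g).det) : d ∣ ddiv k X :=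
  Finset.dvd_gcd fun p _ => h p.1 p.2

/-- Cauchy–Binet style expansion of a minor of a product. -/
lemma det_mul_expand {k : ℕ} (Y X : Matrix (Fin N) (Fin N) ℤ) (f g : Fin k → Fin N) :
    ((Y * X).submatrix f g).det
      = ∑ κ : Fin k → Fin N, (∏ i, Y (f i) (κ i)) * (X.submatrix κ g).det := by
  have h0 : (fun i => ((Y * X).submatrix f g) i)
      = fun i => ∑ n : Fin N, Y (f i) n • (fun j => X n (g j) : Fin k → ℤ) := by
    funext i j
    simp [Matrix.mul_apply, Finset.sum_apply]
  calc ((Y * X).submatrix f g).det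
      = Matrix.detRowAlternating
          (fun i => ∑ n : Fin N, Y (f i) n • (fun j => X n (g j) : Fin k → ℤ)) := by
        rw [← h0]; rfl
    _ = ∑ κ : Fin k → Fin N,
          Matrix.detRowAlternating
            (fun i => Y (f i) (κ i) • (fun j => X (κ i) (g j) : Fin k → ℤ)) := by
        have := (Matrix.detRowAlternating (R := ℤ) (n := Fin k)).toMultilinearMap.map_sum
          (g := fun i n => Y (f i) n • (fun j => X n (g j) : Fin k → ℤ))
        simpa using this
    _ = ∑ κ : Fin k → Fin N, (∏ i, Y (f i) (κ i)) * (X.submatrix κ g).det := by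
        refine Finset.sum_congr rfl fun κ _ => ?_
        have := (Matrix.detRowAlternating (R := ℤ) (n := Fin k)).toMultilinearMap.map_smul_univ
          (fun i => Y (f i) (κ i)) (fun i => (fun j => X (κ i) (g j) : Fin k → ℤ))
        rw [show (X.submatrix κ g).det = Matrix.detRowAlternating (fun i j => X (κ i) (g j)) from rfl]
        simpa [smul_eq_mul] using this

lemma ddiv_dvd_mul_left (k : ℕ) (Y X : Matrix (Fin N) (Fin N) ℤ) :
    ddiv k X ∣ ddiv k (Y * X) := by
  refine dvd_ddiv fun f g => ?_
  rw [det_mul_expand]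
  exact Finset.dvd_sum fun κ _ => Dvd.dvd.mul_left (ddiv_dvd_minor k X κ g) _

lemma ddiv_transpose_dvd (k : ℕ) (X : Matrix (Fin N) (Fin N) ℤ) :
    ddiv k Xᵀ ∣ ddiv k X := by
  refine dvd_ddiv fun f g => ?_
  rw [← Matrix.det_transpose, Matrix.transpose_submatrix]
  exact ddiv_dvd_minor k Xᵀ g f

lemma ddiv_transpose (k : ℕ) (X : Matrix (Fin N) (Fin N) ℤ) :
    ddiv k Xᵀ = ddiv k X := by
  refine Int.dvd_antisymm (ddiv_nonneg _ _) (ddiv_nonneg _ _) (ddiv_transpose_dvd k X) ?_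
  have := ddiv_transpose_dvd k Xᵀ
  rwa [Matrix.transpose_transpose] at this

lemma ddiv_dvd_mul_right (k : ℕ) (X Y : Matrix (Fin N) (Fin N) ℤ) :
    ddiv k X ∣ ddiv k (X * Y) := by
  rw [← ddiv_transpose k (X * Y), Matrix.transpose_mul, ← ddiv_transpose k X]
  exact ddiv_dvd_mul_left k Yᵀ Xᵀ

lemma ddiv_unimodular (k : ℕ) (U X V : Matrix (Fin N) (Fin N) ℤ)
    (hU : IsUnit U.det) (hV : IsUnit V.det) : ddiv k (U * X * V) = ddiv k X := by
  refine Int.dvd_antisymm (ddiv_nonneg _ _) (ddiv_nonneg _ _) ?_ ?_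
  · have h := (ddiv_dvd_mul_right k (U * X * V) V⁻¹).trans
      (ddiv_dvd_mul_left k U⁻¹ (U * X * V * V⁻¹))
    rwa [show U⁻¹ * (U * X * V * V⁻¹) = X by
      rw [Matrix.mul_assoc (U * X) V V⁻¹, Matrix.mul_nonsing_inv _ hV, Matrix.mul_one,
        ← Matrix.mul_assoc, Matrix.nonsing_inv_mul _ hU, Matrix.one_mul]] at h
  · exact (ddiv_dvd_mul_left k U X).trans (ddiv_dvd_mul_right k (U * X) V)

lemma le_of_strictMono {k M : ℕ} {f : Fin k → Fin M} (hf : StrictMono f) :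
    ∀ n (h : n < k), n ≤ (f ⟨n, h⟩ : ℕ) := by
  intro n
  induction n with
  | zero => intro h; exact Nat.zero_le _
  | succ n ih =>
    intro h
    have hn : n < k := Nat.lt_of_succ_lt h
    have h2 : f ⟨n, hn⟩ < f ⟨n + 1, h⟩ := hf (by simp [Fin.lt_def])
    have h3 := ih hn
    rw [Fin.lt_def] at h2
    omega

lemma prod_prefix_dvd {k : ℕ} (hk : k ≤ N) (d : Fin N → ℤ)
    (hchain : ∀ i j : Fin N, i ≤ j → d i ∣ d j) (f : Fin k → Fin N)
    (hf : Function.Injective f) :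
    (∏ i : Fin k, d (Fin.castLE hk i)) ∣ ∏ i : Fin k, d (f i) := by
  set S : Finset (Fin N) := Finset.image f Finset.univ with hS
  have hcard : S.card = k := by
    rw [hS, Finset.card_image_of_injective _ hf, Finset.card_univ, Fintype.card_fin]
  set e := S.orderEmbOfFin hcard with he
  have h1 : ∏ i : Fin k, d (f i) = ∏ i : Fin k, d (e i) := by
    rw [← Finset.prod_image (fun x _ y _ h => hf h)]
    have himg : Finset.image (⇑e) Finset.univ = S := by
      apply Finset.coe_injective
      rw [Finset.coe_image, Finset.coe_univ, Set.image_univ, Finset.range_orderEmbOfFin]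
    rw [← hS, ← himg, Finset.prod_image (fun x _ y _ h => e.injective h)]
  rw [h1]
  refine Finset.prod_dvd_prod_of_dvd _ _ fun i _ => ?_
  refine hchain _ _ ?_
  rw [Fin.le_def]
  exact le_of_strictMono e.strictMono i.1 i.2

lemma prefix_dvd_minor {k : ℕ} (hk : k ≤ N) (D : Matrix (Fin N) (Fin N) ℤ)
    (hdiag : ∀ i j, i ≠ j → D i j = 0)
    (hchain : ∀ i j : Fin N, i ≤ j → D i i ∣ D j j) (f g : Fin k → Fin N) :
    (∏ i : Fin k, D (Fin.castLE hk i) (Fin.castLE hk i)) ∣ (D.submatrix f g).det := by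
  by_cases hf : Function.Injective f
  · by_cases hg : Function.Injective g
    · by_cases hcover : ∀ i, ∃ j, g j = f i
      · choose σ hσ using hcover
        have hσinj : Function.Injective σ := by
          intro i i' h
          apply hf
          rw [← hσ i, ← hσ i', h]
        have hσbij : Function.Bijective σ := (Finite.injective_iff_bijective).mp hσinj
        set eσ : Fin k ≃ Fin k := Equiv.ofBijective σ hσbij with heσ
        have hsub : D.submatrix f g
            = (Matrix.diagonal (fun i => D (f i) (f i))).submatrix id ⇑eσ.symm := by
          ext i j
          by_cases hij : i = eσ.symm j
          · have hji : j = σ i := by rw [hij]; exact (eσ.apply_symm_apply j).symm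
            subst hji
            simp only [Matrix.submatrix_apply, id_eq, ← hij, Matrix.diagonal_apply_eq]
            rw [hσ i]
          · have h1 : g j = f (eσ.symm j) := by
              have := hσ (eσ.symm j)
              rw [show σ (eσ.symm j) = j from eσ.apply_symm_apply j] at this
              exact this
            have h2 : f i ≠ g j := by
              rw [h1]; exact fun hc => hij (hf hc)
            simp [Matrix.submatrix_apply, Matrix.diagonal_apply_ne' _ (Ne.symm hij),
              hdiag _ _ h2]
        rw [hsub]
        have hperm := Matrix.det_permute' (eσ.symm)
          (Matrix.diagonal (fun i => D (f i) (f i)))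
        rw [hperm, Matrix.det_diagonal]
        exact Dvd.dvd.mul_left (prod_prefix_dvd hk (fun i => D i i) hchain f hf) _
      · push_neg at hcover
        obtain ⟨i, hi⟩ := hcover
        rw [Matrix.det_eq_zero_of_row_eq_zero i
          (fun j => hdiag _ _ (fun hc => hi j hc.symm))]
        exact dvd_zero _
    · rw [Function.not_injective_iff] at hg
      obtain ⟨j, j', hjj', hne⟩ := hg
      rw [Matrix.det_zero_of_column_eq hne (fun i => by
        simp [Matrix.submatrix_apply, hjj'])]
      exact dvd_zero _
  · rw [Function.not_injective_iff] at hf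
    obtain ⟨i, i', hii', hne⟩ := hf
    rw [Matrix.det_zero_of_row_eq hne (funext fun j => by
      simp [Matrix.submatrix_apply, hii'])]
    exact dvd_zero _

lemma eq_diagonal {D : Matrix (Fin N) (Fin N) ℤ} (h : ∀ i j, i ≠ j → D i j = 0) :
    D = Matrix.diagonal (fun i => D i i) := by
  ext i j
  by_cases hij : i = j
  · subst hij; simp
  · simp [Matrix.diagonal_apply_ne _ hij, h i j hij]

lemma submatrix_castLE_diag {k : ℕ} (hk : k ≤ N) (D : Matrix (Fin N) (Fin N) ℤ)
    (hdiag : ∀ i j, i ≠ j → D i j = 0) :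
    D.submatrix (Fin.castLE hk) (Fin.castLE hk)
      = Matrix.diagonal (fun i => D (Fin.castLE hk i) (Fin.castLE hk i)) := by
  ext i j
  by_cases hij : i = j
  · subst hij; simp
  · have : Fin.castLE hk i ≠ Fin.castLE hk j := fun hc => hij (Fin.castLE_injective hk hc)
    simp [Matrix.diagonal_apply_ne _ hij, hdiag _ _ this]

lemma ddiv_diag {k : ℕ} (hk : k ≤ N) (D : Matrix (Fin N) (Fin N) ℤ)
    (hdiag : ∀ i j, i ≠ j → D i j = 0) (hpos : ∀ i, 0 < D i i)
    (hchain : ∀ i j : Fin N, i ≤ j → D i i ∣ D j j) :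
    ddiv k D = ∏ i : Fin k, D (Fin.castLE hk i) (Fin.castLE hk i) := by
  refine Int.dvd_antisymm (ddiv_nonneg _ _)
    (le_of_lt (Finset.prod_pos fun i _ => hpos _)) ?_ ?_
  · have h := ddiv_dvd_minor k D (Fin.castLE hk) (Fin.castLE hk)
    rwa [submatrix_castLE_diag hk D hdiag, Matrix.det_diagonal] at h
  · exact dvd_ddiv (prefix_dvd_minor hk D hdiag hchain)

lemma prefix_prod_dvd_det {k : ℕ} (hk : k ≤ N) (D : Matrix (Fin N) (Fin N) ℤ)
    (hdiag : ∀ i j, i ≠ j → D i j = 0) :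
    (∏ i : Fin k, D (Fin.castLE hk i) (Fin.castLE hk i)) ∣ D.det := by
  conv_rhs => rw [eq_diagonal hdiag]
  rw [Matrix.det_diagonal]
  have himg : ∏ x ∈ Finset.image (Fin.castLE hk) Finset.univ, D x x
      = ∏ i : Fin k, D (Fin.castLE hk i) (Fin.castLE hk i) :=
    Finset.prod_image (fun x _ y _ h => Fin.castLE_injective hk h)
  rw [← himg]
  exact Finset.prod_dvd_prod_of_subset _ _ _ (Finset.subset_univ _)

lemma ddiv_smul (k : ℕ) (c : ℤ) (X : Matrix (Fin N) (Fin N) ℤ) :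
    ddiv k (c • X) = normalize (c ^ k) * ddiv k X := by
  rw [ddiv, ddiv]
  rw [show (fun p : (Fin k → Fin N) × (Fin k → Fin N) =>
      (((c • X).submatrix p.1 p.2).det))
      = fun p => c ^ k * ((X.submatrix p.1 p.2).det) from ?_]
  · exact Finset.gcd_mul_left
  · funext p
    rw [show (c • X).submatrix p.1 p.2 = c • (X.submatrix p.1 p.2) from rfl,
      Matrix.det_smul, Fintype.card_fin]

lemma ddiv_mul_coprime (k : ℕ) (A B : Matrix (Fin N) (Fin N) ℤ)
    (hcop : IsCoprime A.det B.det)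
    (ha : ddiv k A ∣ A.det) (hb : ddiv k B ∣ B.det) :
    ddiv k (A * B) = ddiv k A * ddiv k B := by
  have hab : IsCoprime (ddiv k A) (ddiv k B) :=
    (hcop.of_isCoprime_of_dvd_left ha).of_isCoprime_of_dvd_right hb
  refine Int.dvd_antisymm (ddiv_nonneg _ _)
    (mul_nonneg (ddiv_nonneg _ _) (ddiv_nonneg _ _)) ?_ ?_
  · have h1 : ddiv k (A * B) ∣ B.det ^ k * ddiv k A := by
      have e1 : (A * B) * B.adjugate = B.det • A := by
        rw [Matrix.mul_assoc, Matrix.mul_adjugate, Matrix.mul_smul, Matrix.mul_one]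
      have h2 := ddiv_dvd_mul_right k (A * B) B.adjugate
      rw [e1, ddiv_smul] at h2
      exact h2.trans (mul_dvd_mul_right (normalize_dvd_iff.mpr dvd_rfl) _)
    have h2 : ddiv k (A * B) ∣ A.det ^ k * ddiv k B := by
      have e1 : A.adjugate * (A * B) = A.det • B := by
        rw [← Matrix.mul_assoc, Matrix.adjugate_mul, Matrix.smul_mul, Matrix.one_mul]
      have h3 := ddiv_dvd_mul_left k A.adjugate (A * B)
      rw [e1, ddiv_smul] at h3
      exact h3.trans (mul_dvd_mul_right (normalize_dvd_iff.mpr dvd_rfl) _)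
    obtain ⟨u, v, huv⟩ := hcop.pow (m := k) (n := k)
    have key : ddiv k A * ddiv k B
        = (A.det ^ k * ddiv k B) * (u * ddiv k A)
          + (B.det ^ k * ddiv k A) * (v * ddiv k B) := by
      linear_combination (ddiv k A * ddiv k B) * huv.symm
    rw [key]
    exact dvd_add (h2.mul_right _) (h1.mul_right _)
  · exact hab.mul_dvd (ddiv_dvd_mul_right k A B) (ddiv_dvd_mul_left k A B)

end SNFAux

/-- `D` is a Smith normal form of the square integer matrix `A`: it is diagonal with positive
diagonal entries forming a divisibility chain, and is unimodularly equivalent to `A`. -/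
def IsSNFOf {N : ℕ} (D A : Matrix (Fin N) (Fin N) ℤ) : Prop :=
  (∃ U V : Matrix (Fin N) (Fin N) ℤ, IsUnit U.det ∧ IsUnit V.det ∧ D = U * A * V) ∧
    (∀ i j, i ≠ j → D i j = 0) ∧ (∀ i, 0 < D i i) ∧ (∀ i j, i ≤ j → D i i ∣ D j j)

/-- Let `A` and `B` be square integer matrices of the same size with coprime
determinants.  Then the Smith normal form of `AB` is the product of the Smith normal forms of
`A` and `B`: `S(AB) = S(A) S(B)`. -/
theorem snf_mul_of_coprime_det {N : ℕ} (A B : Matrix (Fin N) (Fin N) ℤ)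
    (hcop : IsCoprime A.det B.det)
    (DA DB DAB : Matrix (Fin N) (Fin N) ℤ)
    (hA : IsSNFOf DA A) (hB : IsSNFOf DB B) (hAB : IsSNFOf DAB (A * B)) :
    DAB = DA * DB := by
  open SNFAux in
  obtain ⟨⟨U, V, hU, hV, hUAV⟩, hAdiag, hApos, hAchain⟩ := hA
  obtain ⟨⟨U', V', hU', hV', hUBV⟩, hBdiag, hBpos, hBchain⟩ := hB
  obtain ⟨⟨W, W', hW, hW', hWAB⟩, hCdiag, hCpos, hCchain⟩ := hAB
  have hddA : ∀ k (hk : k ≤ N),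
      SNFAux.ddiv k A = ∏ i : Fin k, DA (Fin.castLE hk i) (Fin.castLE hk i) := by
    intro k hk
    rw [← SNFAux.ddiv_unimodular k U A V hU hV, ← hUAV,
      SNFAux.ddiv_diag hk DA hAdiag hApos hAchain]
  have hddB : ∀ k (hk : k ≤ N),
      SNFAux.ddiv k B = ∏ i : Fin k, DB (Fin.castLE hk i) (Fin.castLE hk i) := by
    intro k hk
    rw [← SNFAux.ddiv_unimodular k U' B V' hU' hV', ← hUBV,
      SNFAux.ddiv_diag hk DB hBdiag hBpos hBchain]
  have hddC : ∀ k (hk : k ≤ N),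
      SNFAux.ddiv k (A * B) = ∏ i : Fin k, DAB (Fin.castLE hk i) (Fin.castLE hk i) := by
    intro k hk
    rw [← SNFAux.ddiv_unimodular k W (A * B) W' hW hW', ← hWAB,
      SNFAux.ddiv_diag hk DAB hCdiag hCpos hCchain]
  have hdetA : ∀ k (hk : k ≤ N), SNFAux.ddiv k A ∣ A.det := by
    intro k hk
    rw [hddA k hk]
    have h1 := SNFAux.prefix_prod_dvd_det hk DA hAdiag
    have hdet : DA.det = U.det * A.det * V.det := by
      rw [hUAV, Matrix.det_mul, Matrix.det_mul]
    rw [hdet] at h1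
    rcases Int.isUnit_iff.mp hU with h | h <;>
      rcases Int.isUnit_iff.mp hV with h' | h' <;>
      rw [h, h'] at h1 <;> simpa using h1
  have hdetB : ∀ k (hk : k ≤ N), SNFAux.ddiv k B ∣ B.det := by
    intro k hk
    rw [hddB k hk]
    have h1 := SNFAux.prefix_prod_dvd_det hk DB hBdiag
    have hdet : DB.det = U'.det * B.det * V'.det := by
      rw [hUBV, Matrix.det_mul, Matrix.det_mul]
    rw [hdet] at h1
    rcases Int.isUnit_iff.mp hU' with h | h <;>
      rcases Int.isUnit_iff.mp hV' with h' | h' <;>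
      rw [h, h'] at h1 <;> simpa using h1
  have hmul : ∀ k (hk : k ≤ N),
      SNFAux.ddiv k (A * B) = SNFAux.ddiv k A * SNFAux.ddiv k B := by
    intro k hk
    exact SNFAux.ddiv_mul_coprime k A B hcop (hdetA k hk) (hdetB k hk)
  have key : ∀ m : Fin N, DAB m m = DA m m * DB m m := by
    intro m
    have hk : (m : ℕ) ≤ N := le_of_lt m.2
    have hk1 : (m : ℕ) + 1 ≤ N := m.2
    have step : ∀ D : Matrix (Fin N) (Fin N) ℤ,
        (∏ i : Fin ((m : ℕ) + 1), D (Fin.castLE hk1 i) (Fin.castLE hk1 i))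
          = (∏ i : Fin (m : ℕ), D (Fin.castLE hk i) (Fin.castLE hk i)) * D m m := by
      intro D
      rw [Fin.prod_univ_castSucc]
      have e2 : Fin.castLE hk1 (Fin.last (m : ℕ)) = m := Fin.ext rfl
      rw [e2]
      congr 1
    have E1 : (∏ i : Fin ((m : ℕ) + 1), DAB (Fin.castLE hk1 i) (Fin.castLE hk1 i))
        = (∏ i : Fin ((m : ℕ) + 1), DA (Fin.castLE hk1 i) (Fin.castLE hk1 i))
          * (∏ i : Fin ((m : ℕ) + 1), DB (Fin.castLE hk1 i) (Fin.castLE hk1 i)) := by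
      rw [← hddC _ hk1, ← hddA _ hk1, ← hddB _ hk1]
      exact hmul _ hk1
    have E0 : (∏ i : Fin (m : ℕ), DAB (Fin.castLE hk i) (Fin.castLE hk i))
        = (∏ i : Fin (m : ℕ), DA (Fin.castLE hk i) (Fin.castLE hk i))
          * (∏ i : Fin (m : ℕ), DB (Fin.castLE hk i) (Fin.castLE hk i)) := by
      rw [← hddC _ hk, ← hddA _ hk, ← hddB _ hk]
      exact hmul _ hk
    rw [step DAB, step DA, step DB] at E1
    have hne : (∏ i : Fin (m : ℕ), DAB (Fin.castLE hk i) (Fin.castLE hk i)) ≠ 0 :=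
      ne_of_gt (Finset.prod_pos fun i _ => hCpos _)
    refine mul_left_cancel₀ hne ?_
    calc (∏ i : Fin (m : ℕ), DAB (Fin.castLE hk i) (Fin.castLE hk i)) * DAB m m
        = (∏ i : Fin (m : ℕ), DA (Fin.castLE hk i) (Fin.castLE hk i)) * DA m m
          * ((∏ i : Fin (m : ℕ), DB (Fin.castLE hk i) (Fin.castLE hk i)) * DB m m) := E1
      _ = (∏ i : Fin (m : ℕ), DAB (Fin.castLE hk i) (Fin.castLE hk i))
          * (DA m m * DB m m) := by rw [E0]; ring
  rw [SNFAux.eq_diagonal hCdiag, SNFAux.eq_diagonal hAdiag, SNFAux.eq_diagonal hBdiag,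
    Matrix.diagonal_mul_diagonal]
  exact congrArg Matrix.diagonal (funext key)
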